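/- Let k,c≥1, let (G,s_1,t_1,…,s_k,t_k) be a problem instance where G has a clique-partition (C_1,…,C_c), and let H, S_0, T_0 be as defined. Let (Y_1,D_1),…,(Y_n,D_n) be the vertices, in order, of a directed path in H with (Y_1,D_1)∈S_0 and (Y_n,D_n)∈T_0, and let Y=Y_1∪…∪Y_n. Then every vertex of G incident with exactly one coloured edge in Y belongs to {s_1,…,s_k,t_1,…,t_k}. -/

import Mathlib

open scoped Classical

noncomputable section

/-- A digraph: loopless, no parallel edges (an adjacency relation);
for distinct `u v` both `adj u v` and `adj v u` may hold. -/
structure Dgraph (V : Type) where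
  adj : V → V → Prop
  irrefl : ∀ v, ¬ adj v v

/-- A directed path in a digraph `G`, given by its (nonempty, duplicate-free) list of
vertices, consecutive vertices being adjacent. -/
structure Dpath {V : Type} (G : Dgraph V) where
  verts : List V
  ne : verts ≠ []
  nodup : verts.Nodup
  chain : verts.Chain' G.adj

namespace Dpath

variable {V : Type} {G : Dgraph V}

/-- `s(P)`, the first vertex of a path. -/
def first (P : Dpath G) : V := P.verts.head P.ne

/-- `t(P)`, the last vertex of a path. -/
def last (P : Dpath G) : V := P.verts.getLast P.ne

/-- `V(P)`, the set of vertices of a path. -/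
def support (P : Dpath G) : Set V := {v | v ∈ P.verts}

/-- The length of a path: its number of edges. -/
def length (P : Dpath G) : ℕ := P.verts.length - 1

/-- `Q` is a subpath of `P`. -/
def IsSubpath (Q P : Dpath G) : Prop := Q.verts <:+: P.verts

/-- `Q` is an initial subpath of `P` (a subpath with `s(Q) = s(P)`). -/
def IsInitialSubpath (Q P : Dpath G) : Prop := Q.verts <+: P.verts

/-- The (directed) edges of a path, as ordered pairs of consecutive vertices. -/
def edges (P : Dpath G) : List (V × V) := P.verts.zip P.verts.tail

end Dpath

variable {V : Type}

/-- A family of paths is a linkage when its members are pairwise vertex-disjoint. -/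
def IsLinkage {G : Dgraph V} {k : ℕ} (L : Fin k → Dpath G) : Prop :=
  ∀ i j, i ≠ j → Disjoint (L i).support (L j).support

/-- `V(L)`, the union of the vertex sets of the members of a linkage. -/
def linkSupport {G : Dgraph V} {k : ℕ} (L : Fin k → Dpath G) : Set V :=
  ⋃ i, (L i).support

/-- `(G, s 1, t 1, …, s k, t k)` is a problem instance: the `2k` vertices are distinct. -/
def IsInstance {k : ℕ} (sv tv : Fin k → V) : Prop :=
  Function.Injective sv ∧ Function.Injective tv ∧ ∀ i j, sv i ≠ tv j

/-- `L` is a linkage for the problem instance: its `i`-th member runs from `s i` to `t i`. -/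
def IsLinkageFor {G : Dgraph V} {k : ℕ} (L : Fin k → Dpath G) (sv tv : Fin k → V) : Prop :=
  IsLinkage L ∧ ∀ i, (L i).first = sv i ∧ (L i).last = tv i

/-- A linkage is minimum if no linkage joining the same pairs of ends uses fewer vertices. -/
def IsMinimumLinkage {G : Dgraph V} {k : ℕ} (L : Fin k → Dpath G) : Prop :=
  IsLinkage L ∧ ∀ L' : Fin k → Dpath G, IsLinkage L' →
    (∀ i, (L' i).first = (L i).first ∧ (L' i).last = (L i).last) →
    (linkSupport L).ncard ≤ (linkSupport L').ncard

/-- A minimum linkage for a problem instance. -/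
def IsMinimumLinkageFor {G : Dgraph V} {k : ℕ} (L : Fin k → Dpath G)
    (sv tv : Fin k → V) : Prop :=
  IsLinkageFor L sv tv ∧ IsMinimumLinkage L

/-- `C ⊆ V(G)` is a clique if `G[C]` is semicomplete. -/
def Dgraph.IsClique (G : Dgraph V) (C : Set V) : Prop :=
  ∀ u ∈ C, ∀ v ∈ C, u ≠ v → (G.adj u v ∨ G.adj v u)

/-- `(C 1, …, C c)` is a clique-partition of `G`: a partition of `V(G)` into
(possibly empty) cliques. -/
def Dgraph.IsCliquePartition (G : Dgraph V) {c : ℕ} (C : Fin c → Set V) : Prop :=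
  (∀ a, G.IsClique (C a)) ∧ ∀ v : V, ∃! a, v ∈ C a

/-- The internal vertices of a linkage: vertices of `V(L)` not an end of any member. -/
def internalVerts {G : Dgraph V} {k : ℕ} (L : Fin k → Dpath G) : Set V :=
  linkSupport L \ ((Set.range fun i => (L i).first) ∪ (Set.range fun i => (L i).last))

/-- `M` is internally disjoint from `L`: no internal vertex of `M` belongs to `V(L)`. -/
def InternallyDisjointFrom {G : Dgraph V} {m k : ℕ} (M : Fin m → Dpath G)
    (L : Fin k → Dpath G) : Prop :=
  ∀ v ∈ internalVerts M, v ∉ linkSupport L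

/-- A planar `(Q,R)`-matching of cardinality `n`: a linkage of `n` paths, each with at most
three vertices, whose first vertices lie on `Q` in order and last vertices lie on `R` in
order. -/
def IsPlanarMatching {G : Dgraph V} {n : ℕ} (Q R : Dpath G) (M : Fin n → Dpath G) : Prop :=
  IsLinkage M ∧ (∀ j, (M j).verts.length ≤ 3) ∧
  (List.ofFn fun j => (M j).first).Sublist Q.verts ∧
  (List.ofFn fun j => (M j).last).Sublist R.verts

/-- A planar `(Q,R)`-matching from `X` to `Y`. -/
def IsPlanarMatchingFromTo {G : Dgraph V} {n : ℕ} (Q R : Dpath G) (M : Fin n → Dpath G)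
    (X Y : Set V) : Prop :=
  IsPlanarMatching Q R M ∧ ∀ j, (M j).first ∈ X ∧ (M j).last ∈ Y

/-- `B ⊆ C` is `C`-acceptable for the linkage `L` (for the instance given by `sv, tv`). -/
def CAcceptable {G : Dgraph V} {k : ℕ} (sv tv : Fin k → V) (L : Fin k → Dpath G)
    (C B : Set V) : Prop :=
  B ⊆ C ∧
  Set.range sv ∩ C ⊆ B ∧
  Set.range tv ∩ B = ∅ ∧
  (∀ i, ∃ Q : Dpath G, Q.IsInitialSubpath (L i) ∧ Q.support ∩ C = (L i).support ∩ B) ∧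
  ∀ i j : Fin k, ¬ ∃ M : Fin (k ^ 2 + k + 2) → Dpath G,
      IsPlanarMatchingFromTo (L i) (L j) M B (C \ B) ∧ InternallyDisjointFrom M L

/-- A list of vertices is `(X,Y)`-alternating: entries with even position (0-based) are
in `X`, those with odd position in `Y`. -/
def Alternating (X Y : Set V) (l : List V) : Prop :=
  ∀ (i : ℕ) (h : i < l.length),
    if i % 2 = 0 then l.get ⟨i, h⟩ ∈ X else l.get ⟨i, h⟩ ∈ Y

/-- `P` contains an `(X,Y)`-alternating sequence (of distinct vertices, in order in `P`)
of length `2 * m`. -/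
def HasAlt {G : Dgraph V} (P : Dpath G) (X Y : Set V) (m : ℕ) : Prop :=
  ∃ l : List V, l.Sublist P.verts ∧ l.length = 2 * m ∧ Alternating X Y l

/-- The `(X,Y)`-wiggle number of `P`: half the length of the longest `(X,Y)`-alternating
sequence of vertices in order in `P`. -/
def wiggle {G : Dgraph V} (P : Dpath G) (X Y : Set V) : ℕ :=
  sSup {m | HasAlt P X Y m}

/-- `zOf k c = c(c(k²+k+1)+k+2)`. -/
def zOf (k c : ℕ) : ℕ := c * (c * (k ^ 2 + k + 1) + k + 2)

/-- `wOf k c = c(c−1)(z+1)+1`. -/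
def wOf (k c : ℕ) : ℕ := c * (c - 1) * (zOf k c + 1) + 1

/-- `rOf k c = ckw`. -/
def rOf (k c : ℕ) : ℕ := c * k * wOf k c

/-- `sOf k = k²+k+3`. -/
def sOf (k : ℕ) : ℕ := k ^ 2 + k + 3

/-- `tOf k c = 2cskw + c(2w+1)k²(k²+k+1)`. -/
def tOf (k c : ℕ) : ℕ :=
  2 * c * sOf k * k * wOf k c + c * (2 * wOf k c + 1) * k ^ 2 * (k ^ 2 + k + 1)

/-- Given a clique-partition `C` and a linkage `L` for the instance, `B` is acceptable
(with `A = V(G) ∖ B`). -/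
def Acceptable {G : Dgraph V} {k c : ℕ} (sv tv : Fin k → V) (L : Fin k → Dpath G)
    (C : Fin c → Set V) (z : ℕ) (B : Set V) : Prop :=
  (∀ i, sv i ∈ B) ∧ (∀ i, tv i ∉ B) ∧
  (∀ a, CAcceptable sv tv L (C a) (B ∩ C a)) ∧
  ∀ a b, a ≠ b → ∀ i, wiggle (L i) (B ∩ C b) (Bᶜ ∩ C a) ≤ z

/-- The vertices of `l` belonging to `C`, in order. -/
def inOrderIn (l : List V) (C : Set V) : List V := l.filter fun v => decide (v ∈ C)

/-- The last `m` (or "up to `m`") vertices of the path `P` in `C`, in order along `P`. -/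
def lastIn {G : Dgraph V} (P : Dpath G) (C : Set V) (m : ℕ) : List V :=
  (inOrderIn P.verts C).drop ((inOrderIn P.verts C).length - m)

/-- The first up-to-`m` vertices of the path `P` in `C`, in order along `P`. -/
def firstUpTo {G : Dgraph V} (P : Dpath G) (C : Set V) (m : ℕ) : List V :=
  (inOrderIn P.verts C).take m

/-- The set of terms of a vertex sequence. -/
def seqSet (X : List V) : Set V := {v | v ∈ X}

/-- `𝒜⁺` for a set `𝒜` of vertex sequences. -/
def plusSet (G : Dgraph V) {c : ℕ} (C : Fin c → Set V) (s : ℕ) (𝒜 : Set (List V)) : Set V :=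
  {v | ∃ X ∈ 𝒜, ∃ a, insert v (seqSet X) ⊆ C a ∧
    (v ∈ X ∨ (v ∉ X ∧ X.length = s ∧ ∀ u ∈ X.drop (X.length - (s - 1)), G.adj u v))}

/-- `𝒜⁻` for a set `𝒜` of vertex sequences. -/
def minusSet (G : Dgraph V) {c : ℕ} (C : Fin c → Set V) (s : ℕ) (𝒜 : Set (List V)) : Set V :=
  {v | ∃ X ∈ 𝒜, ∃ a, insert v (seqSet X) ⊆ C a ∧
    (v ∈ X ∨ (v ∉ X ∧ X.length = s ∧ ∀ u ∈ X.take (s - 1), G.adj v u))}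

/-- A set `D ⊆ V(G)` is `(r,s,t)`-restricted. -/
def Restricted (G : Dgraph V) {c : ℕ} (C : Fin c → Set V) (r s t : ℕ) (D : Set V) : Prop :=
  ∃ 𝒜 ℬ : Set (List V),
    (∀ X ∈ 𝒜, X.length ≤ s) ∧ (∀ X ∈ ℬ, X.length ≤ s) ∧
    𝒜.ncard ≤ r ∧ ℬ.ncard ≤ r ∧
    (plusSet G C s ℬ ∩ minusSet G C s 𝒜).ncard ≤ t ∧
    plusSet G C s ℬ \ minusSet G C s 𝒜 ⊆ D ∧
    D ⊆ plusSet G C s ℬ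

/-- `e` is an enumeration of `V(L) ∖ {s 1,…,s k,t 1,…,t k}`. -/
def IsEnumeration {G : Dgraph V} {k : ℕ} (L : Fin k → Dpath G) (sv tv : Fin k → V)
    (e : List V) : Prop :=
  e.Nodup ∧ {v | v ∈ e} = linkSupport L \ (Set.range sv ∪ Set.range tv)

/-- `B h = {s 1,…,s k} ∪ {v 1,…,v h}`, for the enumeration `e`. -/
def BsetOf {k : ℕ} (sv : Fin k → V) (e : List V) (h : ℕ) : Set V :=
  Set.range sv ∪ {v | v ∈ e.take h}

/-- `A h = V(L) ∖ B h`. -/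
def AsetOf {G : Dgraph V} {k : ℕ} (L : Fin k → Dpath G) (sv : Fin k → V) (e : List V)
    (h : ℕ) : Set V :=
  linkSupport L \ BsetOf sv e h

/-- The maximal subpaths of members of `L` with all vertices in `S`: the components,
included in `S`, of the digraph obtained from `P 1 ∪ ⋯ ∪ P k` by deleting the edges with
exactly one end in `S`. -/
def segsIn {G : Dgraph V} {k : ℕ} (L : Fin k → Dpath G) (S : Set V) : Set (Dpath G) :=
  {Q | ∃ i, Q.IsSubpath (L i) ∧ Q.support ⊆ S ∧
    ∀ Q' : Dpath G, Q'.IsSubpath (L i) → Q'.support ⊆ S → Q.IsSubpath Q' →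
      Q'.verts = Q.verts}

/-- `𝒜 h`: first up-to-`s` vertices in each `C a` of each path of `ℛ h`. -/
def AseqsOf (G : Dgraph V) {k c : ℕ} (C : Fin c → Set V) (s : ℕ) (L : Fin k → Dpath G)
    (sv : Fin k → V) (e : List V) (h : ℕ) : Set (List V) :=
  {X | ∃ R ∈ segsIn L (AsetOf L sv e h), ∃ a, X = firstUpTo R (C a) s}

/-- `ℬ h`: last up-to-`s` vertices in each `C a` of each path of `𝒬 h`. -/
def BseqsOf (G : Dgraph V) {k c : ℕ} (C : Fin c → Set V) (s : ℕ) (L : Fin k → Dpath G)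
    (sv : Fin k → V) (e : List V) (h : ℕ) : Set (List V) :=
  {X | ∃ Q ∈ segsIn L (BsetOf sv e h), ∃ a, X = lastIn Q (C a) s}

/-- `D h = (ℬ h⁺ ∖ 𝒜 h⁻) ∪ B h`. -/
def DsetOf (G : Dgraph V) {k c : ℕ} (C : Fin c → Set V) (s : ℕ) (L : Fin k → Dpath G)
    (sv : Fin k → V) (e : List V) (h : ℕ) : Set V :=
  (plusSet G C s (BseqsOf G C s L sv e h) \ minusSet G C s (AseqsOf G C s L sv e h))
    ∪ BsetOf sv e h

/-- The edges of the members of a linkage. -/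
def linkEdges {G : Dgraph V} {k : ℕ} (L : Fin k → Dpath G) : Set (V × V) :=
  ⋃ i, {p | p ∈ (L i).edges}

/-- `J h`: the edges of `P 1 ∪ ⋯ ∪ P k` with one end in `A h` and the other in `B h`. -/
def JsetOf {G : Dgraph V} {k : ℕ} (L : Fin k → Dpath G) (sv : Fin k → V) (e : List V)
    (h : ℕ) : Set (V × V) :=
  {p ∈ linkEdges L |
    (p.1 ∈ AsetOf L sv e h ∧ p.2 ∈ BsetOf sv e h) ∨
    (p.1 ∈ BsetOf sv e h ∧ p.2 ∈ AsetOf L sv e h)}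

/-- `Y h = {(e,i) : e ∈ J h ∩ E(P i)}`, as a set of coloured edges. -/
def YsetOf {G : Dgraph V} {k : ℕ} (L : Fin k → Dpath G) (sv : Fin k → V) (e : List V)
    (h : ℕ) : Set ((V × V) × Fin k) :=
  {p | p.1 ∈ JsetOf L sv e h ∧ p.1 ∈ (L p.2).edges}

/-- `ℰ`: the admissible sets of coloured edges (a coloured edge is a pair `(e,i)` with
`e ∈ E(G)` and `i` a colour in `Fin k`; its tail is `e.1` and its head is `e.2`). -/
def EdgeSets (G : Dgraph V) {k : ℕ} (sv tv : Fin k → V) (w : ℕ) :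
    Set (Set ((V × V) × Fin k)) :=
  {Y | (∀ p ∈ Y, G.adj p.1.1 p.1.2) ∧
    Y.ncard ≤ 2 * w - 1 ∧
    (∀ p ∈ Y, ∀ q ∈ Y, p ≠ q → p.1.2 ≠ q.1.2 ∧ p.1.1 ≠ q.1.1) ∧
    (∀ p ∈ Y, ∀ q ∈ Y, ({p.1.1, p.1.2} ∩ {q.1.1, q.1.2} : Set V).Nonempty → p.2 = q.2) ∧
    (∀ p ∈ Y, p.1.2 ∉ Set.range sv ∧ p.1.1 ∉ Set.range tv) ∧
    (∀ p ∈ Y, ∀ i, (p.1.1 = sv i → p.2 = i) ∧ (p.1.2 = tv i → p.2 = i))}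

/-- The vertices of the auxiliary digraph `H`: pairs `(Y,D)` with `Y ∈ ℰ`, `D ∈ 𝒟`
(i.e. `D` is `(r,s,t)`-restricted), such that every coloured edge of `Y` has exactly one
end in `D`. -/
def HVert (G : Dgraph V) {k c : ℕ} (sv tv : Fin k → V) (C : Fin c → Set V)
    (w r s t : ℕ) (x : Set ((V × V) × Fin k) × Set V) : Prop :=
  x.1 ∈ EdgeSets G sv tv w ∧ Restricted G C r s t x.2 ∧
  ∀ p ∈ x.1, Xor' (p.1.1 ∈ x.2) (p.1.2 ∈ x.2)

/-- Adjacency in the auxiliary digraph `H`. -/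
def HAdj (G : Dgraph V) {k c : ℕ} (sv tv : Fin k → V) (C : Fin c → Set V)
    (w r s t : ℕ) (x y : Set ((V × V) × Fin k) × Set V) : Prop :=
  x ≠ y ∧ HVert G sv tv C w r s t x ∧ HVert G sv tv C w r s t y ∧ x.2 ⊆ y.2 ∧
  ∃ p q : (V × V) × Fin k, p ≠ q ∧ symmDiff x.1 y.1 = {p, q} ∧
    p.1.2 = q.1.1 ∧ p.1.1 ≠ q.1.2 ∧ p.1.2 ∈ y.2 \ x.2

/-- The auxiliary digraph `H`. -/
def auxH (G : Dgraph V) {k c : ℕ} (sv tv : Fin k → V) (C : Fin c → Set V)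
    (w r s t : ℕ) : Dgraph (Set ((V × V) × Fin k) × Set V) :=
  ⟨HAdj G sv tv C w r s t, fun _ hx => hx.1 rfl⟩

/-- `S 0`: the vertices `(Y,D)` of `H` with `|Y| = k` and every member of `Y` having tail
in `{s 1,…,s k}`. -/
def S0set (G : Dgraph V) {k c : ℕ} (sv tv : Fin k → V) (C : Fin c → Set V)
    (w r s t : ℕ) : Set (Set ((V × V) × Fin k) × Set V) :=
  {x | HVert G sv tv C w r s t x ∧ x.1.ncard = k ∧ ∀ p ∈ x.1, p.1.1 ∈ Set.range sv}

/-- `T 0`: the vertices `(Y,D)` of `H` with `|Y| = k` and every member of `Y` having head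
in `{t 1,…,t k}`. -/
def T0set (G : Dgraph V) {k c : ℕ} (sv tv : Fin k → V) (C : Fin c → Set V)
    (w r s t : ℕ) : Set (Set ((V × V) × Fin k) × Set V) :=
  {x | HVert G sv tv C w r s t x ∧ x.1.ncard = k ∧ ∀ p ∈ x.1, p.1.2 ∈ Set.range tv}

end
/-- Step (4) of the proof of Theorem 5.1: along a directed path in `H` from `S 0` to
`T 0`, every vertex of `G` incident with exactly one coloured edge of `Y = Y 1 ∪ ⋯ ∪ Y n`
belongs to `{s 1,…,s k,t 1,…,t k}`. -/
theorem aux_path_degree_one {V : Type} [Fintype V] {k c : ℕ} (hk : 1 ≤ k) (hc : 1 ≤ c)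
    (G : Dgraph V) (sv tv : Fin k → V) (hinst : IsInstance sv tv)
    (C : Fin c → Set V) (hpart : G.IsCliquePartition C)
    (P : Dpath (auxH G sv tv C (wOf k c) (rOf k c) (sOf k) (tOf k c)))
    (hS : P.first ∈ S0set G sv tv C (wOf k c) (rOf k c) (sOf k) (tOf k c))
    (hT : P.last ∈ T0set G sv tv C (wOf k c) (rOf k c) (sOf k) (tOf k c)) :
    ∀ v : V,
      (∃! p : (V × V) × Fin k,
        p ∈ (⋃ x ∈ P.support, x.1) ∧ (v = p.1.1 ∨ v = p.1.2)) →
      v ∈ Set.range sv ∪ Set.range tv := by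
  classical
  intro v hv
  obtain ⟨e, ⟨heY, hev⟩, hu⟩ := hv
  set l := P.verts with hl
  have hll : P.verts.length = l.length := by rw [hl]
  have hlen : 0 < l.length := List.length_pos_iff.mpr P.ne
  have hadj : ∀ i (h : i < l.length - 1),
      HAdj G sv tv C (wOf k c) (rOf k c) (sOf k) (tOf k c)
        (l.get ⟨i, by omega⟩) (l.get ⟨i + 1, by omega⟩) := by
    have := List.isChain_iff_getElem.mp P.chain
    intro i h
    exact this i (by omega)
  have hfirst : P.first = l.get ⟨0, hlen⟩ := (List.get_mk_zero hlen).symm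
  have hlast : P.last = l.get ⟨l.length - 1, by omega⟩ := List.getLast_eq_getElem P.ne
  have hvert : ∀ i : Fin l.length,
      HVert G sv tv C (wOf k c) (rOf k c) (sOf k) (tOf k c) (l.get i) := by
    intro i
    rcases Nat.eq_zero_or_pos i.val with h0 | hpos
    · have hi : i = ⟨0, hlen⟩ := Fin.ext h0
      rw [hi, ← hfirst]; exact hS.1
    · have h := hadj (i.val - 1) (by omega)
      have hi : (⟨i.val - 1 + 1, by omega⟩ : Fin l.length) = i := Fin.ext (by simp only [Fin.val_mk]; omega)
      rw [hi] at h
      exact h.2.2.1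
  have hmonoAux : ∀ (d i : ℕ) (h : i + d < l.length),
      (l.get ⟨i, by omega⟩).2 ⊆ (l.get ⟨i + d, h⟩).2 := by
    intro d
    induction d with
    | zero => intro i h; exact subset_rfl
    | succ m ih =>
      intro i h
      have h1 : i + m < l.length := by omega
      exact (ih i h1).trans (hadj (i + m) (by omega)).2.2.2.1
  have hmono : ∀ (i j : ℕ) (hi : i < l.length) (hj : j < l.length), i ≤ j →
      (l.get ⟨i, hi⟩).2 ⊆ (l.get ⟨j, hj⟩).2 := by
    intro i j hi hj hij
    have h := hmonoAux (j - i) i (by omega)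
    have hfin : (⟨i + (j - i), by omega⟩ : Fin l.length) = ⟨j, hj⟩ := Fin.ext (by simp only [Fin.val_mk]; omega)
    rwa [hfin] at h
  have hYun : ∀ (i : Fin l.length) (p : (V × V) × Fin k), p ∈ (l.get i).1 →
      p ∈ ⋃ x ∈ P.support, x.1 := by
    intro i p hp
    exact Set.mem_biUnion (show l.get i ∈ P.support from List.get_mem l i) hp
  have hu' : ∀ p : (V × V) × Fin k, p ∈ (⋃ x ∈ P.support, x.1) →
      (v = p.1.1 ∨ v = p.1.2) → p = e := fun p h1 h2 => hu p ⟨h1, h2⟩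
  -- The swap lemma, tail version.
  have hswapT : ∀ (i : ℕ) (h : i + 1 < l.length), v = e.1.1 →
      e ∈ symmDiff (l.get ⟨i, by omega⟩).1 (l.get ⟨i + 1, h⟩).1 →
      e.1.2 ∈ (l.get ⟨i + 1, h⟩).2 \ (l.get ⟨i, by omega⟩).2 ∧
      ∃ f : (V × V) × Fin k,
        (f ∈ (l.get ⟨i, by omega⟩).1 ∨ f ∈ (l.get ⟨i + 1, h⟩).1) ∧ f.1.1 = e.1.2 := by
    intro i h hv1 hsd
    obtain ⟨-, -, -, -, p, q, hpq, hsd', hmid, hends, hmD⟩ := hadj i (by omega)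
    have hpU : p ∈ (l.get ⟨i, by omega⟩).1 ∨ p ∈ (l.get ⟨i + 1, h⟩).1 := by
      have hp : p ∈ symmDiff (l.get ⟨i, by omega⟩).1 (l.get ⟨i + 1, h⟩).1 := by
        rw [hsd']; exact Set.mem_insert _ _
      rcases Set.mem_symmDiff.mp hp with h' | h'
      · exact Or.inl h'.1
      · exact Or.inr h'.1
    have hqU : q ∈ (l.get ⟨i, by omega⟩).1 ∨ q ∈ (l.get ⟨i + 1, h⟩).1 := by
      have hq : q ∈ symmDiff (l.get ⟨i, by omega⟩).1 (l.get ⟨i + 1, h⟩).1 := by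
        rw [hsd']; exact Set.mem_insert_of_mem _ rfl
      rcases Set.mem_symmDiff.mp hq with h' | h'
      · exact Or.inl h'.1
      · exact Or.inr h'.1
    have hpY : p ∈ ⋃ x ∈ P.support, x.1 := hpU.elim (hYun _ p) (hYun _ p)
    have hqY : q ∈ ⋃ x ∈ P.support, x.1 := hqU.elim (hYun _ q) (hYun _ q)
    have hvm : v ≠ p.1.2 := by
      intro hvm
      have h1 : p = e := hu' p hpY (Or.inr hvm)
      have h2 : q = e := hu' q hqY (Or.inl (by rw [← hmid]; exact hvm))
      exact hpq (h1.trans h2.symm)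
    rw [hsd'] at hsd
    simp only [Set.mem_insert_iff, Set.mem_singleton_iff] at hsd
    rcases hsd with rfl | rfl
    · exact ⟨hmD, q, hqU, hmid.symm⟩
    · exact absurd (hv1.trans hmid.symm) hvm
  -- The swap lemma, head version.
  have hswapH : ∀ (i : ℕ) (h : i + 1 < l.length), v = e.1.2 →
      e ∈ symmDiff (l.get ⟨i, by omega⟩).1 (l.get ⟨i + 1, h⟩).1 →
      e.1.1 ∈ (l.get ⟨i + 1, h⟩).2 \ (l.get ⟨i, by omega⟩).2 ∧
      ∃ f : (V × V) × Fin k,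
        (f ∈ (l.get ⟨i, by omega⟩).1 ∨ f ∈ (l.get ⟨i + 1, h⟩).1) ∧ f.1.2 = e.1.1 := by
    intro i h hv2 hsd
    obtain ⟨-, -, -, -, p, q, hpq, hsd', hmid, hends, hmD⟩ := hadj i (by omega)
    have hpU : p ∈ (l.get ⟨i, by omega⟩).1 ∨ p ∈ (l.get ⟨i + 1, h⟩).1 := by
      have hp : p ∈ symmDiff (l.get ⟨i, by omega⟩).1 (l.get ⟨i + 1, h⟩).1 := by
        rw [hsd']; exact Set.mem_insert _ _
      rcases Set.mem_symmDiff.mp hp with h' | h'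
      · exact Or.inl h'.1
      · exact Or.inr h'.1
    have hqU : q ∈ (l.get ⟨i, by omega⟩).1 ∨ q ∈ (l.get ⟨i + 1, h⟩).1 := by
      have hq : q ∈ symmDiff (l.get ⟨i, by omega⟩).1 (l.get ⟨i + 1, h⟩).1 := by
        rw [hsd']; exact Set.mem_insert_of_mem _ rfl
      rcases Set.mem_symmDiff.mp hq with h' | h'
      · exact Or.inl h'.1
      · exact Or.inr h'.1
    have hpY : p ∈ ⋃ x ∈ P.support, x.1 := hpU.elim (hYun _ p) (hYun _ p)
    have hqY : q ∈ ⋃ x ∈ P.support, x.1 := hqU.elim (hYun _ q) (hYun _ q)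
    have hvm : v ≠ p.1.2 := by
      intro hvm
      have h1 : p = e := hu' p hpY (Or.inr hvm)
      have h2 : q = e := hu' q hqY (Or.inl (by rw [← hmid]; exact hvm))
      exact hpq (h1.trans h2.symm)
    rw [hsd'] at hsd
    simp only [Set.mem_insert_iff, Set.mem_singleton_iff] at hsd
    rcases hsd with rfl | rfl
    · exact absurd hv2 hvm
    · refine ⟨by rw [← hmid]; exact hmD, p, hpU, by rw [hmid]⟩
  obtain ⟨x, hx, hex⟩ := Set.mem_iUnion₂.mp heY
  obtain ⟨jx, hjx⟩ := List.mem_iff_get.mp hx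
  have hej : e ∈ (l.get jx).1 := by rw [hjx]; exact hex
  rcases hev with hv1 | hv2
  · -- v is the tail of e
    by_cases h1 : e ∈ (l.get ⟨0, hlen⟩).1
    · left
      rw [hv1]
      exact hS.2.2 e (by rw [hfirst]; exact h1)
    · -- entering step exists
      have hQ : ∃ m, ∃ hm : m < l.length, e ∈ (l.get ⟨m, hm⟩).1 := ⟨jx.1, jx.2, hej⟩
      obtain ⟨hm1lt, hm1mem⟩ := Nat.find_spec hQ
      have hm1pos : 0 < Nat.find hQ := by
        rcases Nat.eq_zero_or_pos (Nat.find hQ) with heq | h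
        · exfalso
          apply h1
          have hfin : (⟨Nat.find hQ, hm1lt⟩ : Fin l.length) = ⟨0, hlen⟩ := Fin.ext heq
          rw [hfin] at hm1mem; exact hm1mem
        · exact h
      have hprev : e ∉ (l.get ⟨Nat.find hQ - 1, by omega⟩).1 := fun hmem =>
        Nat.find_min hQ (show Nat.find hQ - 1 < Nat.find hQ by omega) ⟨by omega, hmem⟩
      have hstep : Nat.find hQ - 1 + 1 < l.length := by omega
      have hsd : e ∈ symmDiff (l.get ⟨Nat.find hQ - 1, by omega⟩).1
          (l.get ⟨Nat.find hQ - 1 + 1, hstep⟩).1 := by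
        apply Set.mem_symmDiff.mpr
        right
        refine ⟨?_, hprev⟩
        have hfin : (⟨Nat.find hQ - 1 + 1, hstep⟩ : Fin l.length)
            = ⟨Nat.find hQ, hm1lt⟩ := Fin.ext (by simp only [Fin.val_mk]; omega)
        rw [hfin]; exact hm1mem
      obtain ⟨hDmem, f, hfU, hf1⟩ := hswapT (Nat.find hQ - 1) hstep hv1 hsd
      exfalso
      by_cases h2 : e ∈ (l.get ⟨l.length - 1, by omega⟩).1
      · have htv : e.1.2 ∈ Set.range tv := hT.2.2 e (by rw [hlast]; exact h2)
        rcases hfU with hf | hf <;>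
          exact ((hvert _).1.2.2.2.2.1 f hf).2 (by rw [hf1]; exact htv)
      · -- exit step after the entering step
        have hQ2 : ∃ d, ∃ hd : Nat.find hQ + d < l.length,
            e ∉ (l.get ⟨Nat.find hQ + d, hd⟩).1 := by
          refine ⟨l.length - 1 - Nat.find hQ, by omega, ?_⟩
          have hfin : (⟨Nat.find hQ + (l.length - 1 - Nat.find hQ), by omega⟩ : Fin l.length)
              = ⟨l.length - 1, by omega⟩ := Fin.ext (by simp only [Fin.val_mk]; omega)
          rw [hfin]; exact h2
        obtain ⟨hd0lt, hd0mem⟩ := Nat.find_spec hQ2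
        have hd0pos : 0 < Nat.find hQ2 := by
          rcases Nat.eq_zero_or_pos (Nat.find hQ2) with heq | h
          · exfalso
            apply hd0mem ∘ fun h => h
            have hfin : (⟨Nat.find hQ + Nat.find hQ2, hd0lt⟩ : Fin l.length)
                = ⟨Nat.find hQ, hm1lt⟩ := Fin.ext (by simp only [Fin.val_mk]; omega)
            rw [hfin]; exact hm1mem
          · exact h
        have hdprev : e ∈ (l.get ⟨Nat.find hQ + (Nat.find hQ2 - 1), by omega⟩).1 := by
          by_contra hmem
          exact Nat.find_min hQ2 (show Nat.find hQ2 - 1 < Nat.find hQ2 by omega)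
            ⟨by omega, hmem⟩
        have hstep2 : Nat.find hQ + (Nat.find hQ2 - 1) + 1 < l.length := by omega
        have hsd2 : e ∈ symmDiff (l.get ⟨Nat.find hQ + (Nat.find hQ2 - 1), by omega⟩).1
            (l.get ⟨Nat.find hQ + (Nat.find hQ2 - 1) + 1, hstep2⟩).1 := by
          apply Set.mem_symmDiff.mpr
          left
          refine ⟨hdprev, ?_⟩
          have hfin : (⟨Nat.find hQ + (Nat.find hQ2 - 1) + 1, hstep2⟩ : Fin l.length)
              = ⟨Nat.find hQ + Nat.find hQ2, hd0lt⟩ := Fin.ext (by simp only [Fin.val_mk]; omega)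
          rw [hfin]; exact hd0mem
        obtain ⟨hDmem2, -⟩ := hswapT _ hstep2 hv1 hsd2
        exact hDmem2.2 (hmono (Nat.find hQ - 1 + 1) (Nat.find hQ + (Nat.find hQ2 - 1))
          hstep (by omega) (by omega) hDmem.1)
  · -- v is the head of e
    by_cases h2 : e ∈ (l.get ⟨l.length - 1, by omega⟩).1
    · right
      rw [hv2]
      exact hT.2.2 e (by rw [hlast]; exact h2)
    · -- exit step exists (after jx)
      have hQ2 : ∃ d, ∃ hd : jx.1 + d < l.length, e ∉ (l.get ⟨jx.1 + d, hd⟩).1 := by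
        refine ⟨l.length - 1 - jx.1, by omega, ?_⟩
        have hfin : (⟨jx.1 + (l.length - 1 - jx.1), by omega⟩ : Fin l.length)
            = ⟨l.length - 1, by omega⟩ := Fin.ext (by simp only [Fin.val_mk]; omega)
        rw [hfin]; exact h2
      obtain ⟨hd0lt, hd0mem⟩ := Nat.find_spec hQ2
      have hd0pos : 0 < Nat.find hQ2 := by
        rcases Nat.eq_zero_or_pos (Nat.find hQ2) with heq | h
        · exfalso
          apply hd0mem
          have hfin : (⟨jx.1 + Nat.find hQ2, hd0lt⟩ : Fin l.length) = jx :=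
            Fin.ext (by simp only [Fin.val_mk]; omega)
          rw [hfin]; exact hej
        · exact h
      have hdprev : e ∈ (l.get ⟨jx.1 + (Nat.find hQ2 - 1), by omega⟩).1 := by
        by_contra hmem
        exact Nat.find_min hQ2 (show Nat.find hQ2 - 1 < Nat.find hQ2 by omega)
          ⟨by omega, hmem⟩
      have hstep2 : jx.1 + (Nat.find hQ2 - 1) + 1 < l.length := by omega
      have hsd2 : e ∈ symmDiff (l.get ⟨jx.1 + (Nat.find hQ2 - 1), by omega⟩).1
          (l.get ⟨jx.1 + (Nat.find hQ2 - 1) + 1, hstep2⟩).1 := by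
        apply Set.mem_symmDiff.mpr
        left
        refine ⟨hdprev, ?_⟩
        have hfin : (⟨jx.1 + (Nat.find hQ2 - 1) + 1, hstep2⟩ : Fin l.length)
            = ⟨jx.1 + Nat.find hQ2, hd0lt⟩ := Fin.ext (by simp only [Fin.val_mk]; omega)
        rw [hfin]; exact hd0mem
      obtain ⟨hDmem2, f, hfU, hf2⟩ := hswapH _ hstep2 hv2 hsd2
      exfalso
      by_cases h1 : e ∈ (l.get ⟨0, hlen⟩).1
      · have hsv : e.1.1 ∈ Set.range sv := hS.2.2 e (by rw [hfirst]; exact h1)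
        rcases hfU with hf | hf <;>
          exact ((hvert _).1.2.2.2.2.1 f hf).1 (by rw [hf2]; exact hsv)
      · -- entering step exists, before the exit step
        have hQ : ∃ m, ∃ hm : m < l.length, e ∈ (l.get ⟨m, hm⟩).1 := ⟨jx.1, jx.2, hej⟩
        obtain ⟨hm1lt, hm1mem⟩ := Nat.find_spec hQ
        have hm1pos : 0 < Nat.find hQ := by
          rcases Nat.eq_zero_or_pos (Nat.find hQ) with heq | h
          · exfalso
            apply h1
            have hfin : (⟨Nat.find hQ, hm1lt⟩ : Fin l.length) = ⟨0, hlen⟩ := Fin.ext heq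
            rw [hfin] at hm1mem; exact hm1mem
          · exact h
        have hprev : e ∉ (l.get ⟨Nat.find hQ - 1, by omega⟩).1 := fun hmem =>
          Nat.find_min hQ (show Nat.find hQ - 1 < Nat.find hQ by omega) ⟨by omega, hmem⟩
        have hstep : Nat.find hQ - 1 + 1 < l.length := by omega
        have hsd : e ∈ symmDiff (l.get ⟨Nat.find hQ - 1, by omega⟩).1
            (l.get ⟨Nat.find hQ - 1 + 1, hstep⟩).1 := by
          apply Set.mem_symmDiff.mpr
          right
          refine ⟨?_, hprev⟩
          have hfin : (⟨Nat.find hQ - 1 + 1, hstep⟩ : Fin l.length)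
              = ⟨Nat.find hQ, hm1lt⟩ := Fin.ext (by simp only [Fin.val_mk]; omega)
          rw [hfin]; exact hm1mem
        obtain ⟨hDmem, -⟩ := hswapH (Nat.find hQ - 1) hstep hv2 hsd
        have hle : Nat.find hQ ≤ jx.1 := Nat.find_le ⟨jx.2, hej⟩
        exact hDmem2.2 (hmono (Nat.find hQ - 1 + 1) (jx.1 + (Nat.find hQ2 - 1))
          hstep (by omega) (by omega) hDmem.1)
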